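/- Let K be a field, n a natural number, and p : A → V a chain map of ℤ-indexed chain complexes of K-vector spaces that is degreewise surjective and a quasi-isomorphism. For chain complexes X, Y of K-vector spaces write Hom(X, Y) for the hom-complex with Hom(X, Y)ₖ = ∏ᵢ Hom_K(Xᵢ, Y_{i+k}) and differential ∂h = d_Y ∘ h − (−1)^{|h|} h ∘ d_X. Let P(A, p, V) be the chain complex whose degree-k component is Hom(A^{⊗n}, A)ₖ ⊕ Hom(A^{⊗n}, V)_{k+1} ⊕ Hom(V^{⊗n}, V)ₖ, with differential d(g_A, h, g_V) = (∂g_A, p ∘ g_A − g_V ∘ p^{⊗n} − ∂h, ∂g_V). Let Q be the subcomplex of the product complex Hom(A^{⊗n}, A) × Hom(V^{⊗n}, V) consisting of the pairs (g_A, g_V) with p ∘ g_A = g_V ∘ p^{⊗n}. Then the chain map Q → P(A, p, V) sending (g_A, g_V) to (g_A, 0, g_V) is a quasi-isomorphism. -/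

import Mathlib

open CategoryTheory MonoidalCategory Limits

set_option synthInstance.maxHeartbeats 1000000
set_option maxHeartbeats 1000000

variable (K : Type) [Field K]

/-! ### The monoidal structure on `ℤ`-indexed chain complexes of `K`-vector spaces -/

noncomputable instance : (curriedTensor (ModuleCat K)).Additive where
  map_add := by intros; ext; simp [MonoidalPreadditive.add_whiskerRight]

noncomputable instance (X : ModuleCat K) :
    PreservesColimitsOfSize.{0, 0} ((curriedTensor (ModuleCat K)).obj X) :=
  (ihom.adjunction X).leftAdjoint_preservesColimits

/-- By the braiding, tensoring on the right agrees with tensoring on the left. -/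
noncomputable def tensorRightIsoTensorLeft (X : ModuleCat K) :
    (curriedTensor (ModuleCat K)).flip.obj X ≅ (curriedTensor (ModuleCat K)).obj X :=
  NatIso.ofComponents (fun Y => β_ Y X) (by intros; simp)

noncomputable instance (X : ModuleCat K) :
    PreservesColimitsOfSize.{0, 0} ((curriedTensor (ModuleCat K)).flip.obj X) :=
  preservesColimits_of_natIso (tensorRightIsoTensorLeft K X).symm

instance : (ComplexShape.down ℤ).TensorSigns where
  ε' := MonoidHom.mk' (fun i : Multiplicative ℤ => Int.negOnePow (Multiplicative.toAdd i))
    (fun a b => Int.negOnePow_add (Multiplicative.toAdd a) (Multiplicative.toAdd b))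
  rel_add p q r (hpq : q + 1 = p) := by show q + r + 1 = p + r; omega
  add_rel p q r (hpq : q + 1 = p) := by show r + q + 1 = r + p; omega
  ε'_succ := by
    rintro p q (hpq : q + 1 = p)
    subst hpq
    show Int.negOnePow q = - Int.negOnePow (q + 1)
    rw [Int.negOnePow_succ, neg_neg]

/-- The tensor product of `ℤ`-indexed chain complexes of `K`-vector spaces, with
`(V ⊗ W)ₖ = ⊕_{i+j=k} Vᵢ ⊗ Wⱼ` and the Koszul sign rule for the differential. -/
noncomputable instance : MonoidalCategory (ChainComplex (ModuleCat K) ℤ) :=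
  HomologicalComplex.monoidalCategory (ModuleCat K) (ComplexShape.down ℤ)

/-- The `n`-fold tensor power `A^{⊗n}` of a chain complex. -/
noncomputable def tpow (A : ChainComplex (ModuleCat K) ℤ) :
    ℕ → ChainComplex (ModuleCat K) ℤ
  | 0 => 𝟙_ (ChainComplex (ModuleCat K) ℤ)
  | n + 1 => tpow A n ⊗ A

/-- The `n`-fold tensor power `p^{⊗n}` of a chain map. -/
noncomputable def tpowMap {A V : ChainComplex (ModuleCat K) ℤ} (p : A ⟶ V) :
    ∀ n : ℕ, tpow K A n ⟶ tpow K V n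
  | 0 => 𝟙 _
  | n + 1 => tpowMap p n ⊗ₘ p

/-! ### Hom-complexes -/

lemma d_d_apply {R : Type} [Ring R] (Y : ChainComplex (ModuleCat R) ℤ)
    (a b c : ℤ) (y : Y.X a) : Y.d b c (Y.d a b y) = 0 := by
  calc Y.d b c (Y.d a b y) = (Y.d a b ≫ Y.d b c) y := rfl
    _ = (0 : Y.X a ⟶ Y.X c) y := by rw [Y.d_comp_d a b c]
    _ = 0 := rfl

lemma d_XIsoOfEq_hom_apply {R : Type} [Ring R] (Y : ChainComplex (ModuleCat R) ℤ)
    {a b a' b' : ℤ} (ha : a = a') (hb : b = b') (y : Y.X a) :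
    Y.d a' b' ((Y.XIsoOfEq ha).hom y) = (Y.XIsoOfEq hb).hom (Y.d a b y) := by
  subst ha; subst hb; simp

lemma hom_comm_apply {R : Type} [Ring R] {A B : ChainComplex (ModuleCat R) ℤ}
    (q : A ⟶ B) (i j : ℤ) (x : A.X i) :
    B.d i j (q.f i x) = q.f j (A.d i j x) := by
  calc B.d i j (q.f i x) = (q.f i ≫ B.d i j) x := rfl
    _ = (A.d i j ≫ q.f j) x := by rw [q.comm i j]
    _ = q.f j (A.d i j x) := rfl

lemma XIsoOfEq_hom_naturality {R : Type} [Ring R] {A V : ChainComplex (ModuleCat R) ℤ}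
    (p : A ⟶ V) {a b : ℤ} (e : a = b) (y : A.X a) :
    (V.XIsoOfEq e).hom (p.f a y) = p.f b ((A.XIsoOfEq e).hom y) := by
  subst e; simp

/-- The differential of the hom-complex `Hom(X, Y)`, from degree `k` to degree
`l = k - 1`; it sends `h` to `d_Y ∘ h - (-1)^k h ∘ d_X`. -/
noncomputable def homComplexD (X Y : ChainComplex (ModuleCat K) ℤ) (k l : ℤ)
    (h : l + 1 = k) :
    (ModuleCat.of K (∀ i : ℤ, X.X i →ₗ[K] Y.X (i + k))) ⟶
    (ModuleCat.of K (∀ i : ℤ, X.X i →ₗ[K] Y.X (i + l))) :=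
  ModuleCat.ofHom <| LinearMap.pi fun i =>
    ((LinearMap.llcomp K (X.X i) (Y.X (i + k)) (Y.X (i + l))
        (Y.d (i + k) (i + l)).hom).comp (LinearMap.proj i))
    - ((-1 : K) ^ k) •
      ((LinearMap.lcomp K (Y.X (i + l)) (X.d i (i - 1)).hom).comp
        (((LinearMap.llcomp K (X.X (i - 1)) (Y.X (i - 1 + k)) (Y.X (i + l)))
            ((Y.XIsoOfEq (show i - 1 + k = i + l by omega)).hom.hom)).comp
          (LinearMap.proj (i - 1))))

lemma homComplexD_apply (X Y : ChainComplex (ModuleCat K) ℤ) (k l : ℤ)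
    (h : l + 1 = k) (f : ∀ i : ℤ, X.X i →ₗ[K] Y.X (i + k)) (i : ℤ) (x : X.X i) :
    homComplexD K X Y k l h f i x
      = Y.d (i + k) (i + l) (f i x)
        - ((-1 : K) ^ k) •
            (Y.XIsoOfEq (show i - 1 + k = i + l by omega)).hom
              (f (i - 1) (X.d i (i - 1) x)) := rfl

/-- The hom-complex `Hom(X, Y)`, with `Hom(X, Y)ₖ = ∏ᵢ Hom(Xᵢ, Y_{i+k})` and
differential `∂h = d_Y ∘ h - (-1)^{|h|} h ∘ d_X`. -/
noncomputable def homComplex (X Y : ChainComplex (ModuleCat K) ℤ) :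
    ChainComplex (ModuleCat K) ℤ where
  X k := ModuleCat.of K (∀ i : ℤ, X.X i →ₗ[K] Y.X (i + k))
  d k l := if h : l + 1 = k then homComplexD K X Y k l h else 0
  shape k l h := dif_neg h
  d_comp_d' k l m hkl hlm := by
    obtain rfl : l + 1 = k := hkl
    obtain rfl : m + 1 = l := hlm
    rw [dif_pos rfl, dif_pos rfl]
    apply ModuleCat.hom_ext
    apply LinearMap.ext
    intro f
    funext i
    apply LinearMap.ext
    intro x
    have e1 : (homComplexD K X Y (m + 1 + 1) (m + 1) rfl ≫
        homComplexD K X Y (m + 1) m rfl) f i x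
        = homComplexD K X Y (m + 1) m rfl
            (homComplexD K X Y (m + 1 + 1) (m + 1) rfl f) i x := rfl
    rw [e1, homComplexD_apply, homComplexD_apply, homComplexD_apply]
    rw [d_d_apply]
    rw [map_sub, map_smul, map_sub, map_smul]
    rw [d_XIsoOfEq_hom_apply Y (show i - 1 + (m + 1 + 1) = i + (m + 1) by omega)
      (show i - 1 + (m + 1) = i + m by omega)]
    rw [d_d_apply Y]
    have hsign : ((-1 : K) ^ (m + 1 + 1)) = -((-1 : K) ^ (m + 1)) := by
      rw [zpow_add_one₀ (by norm_num : (-1 : K) ≠ 0)]; ring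
    rw [hsign]
    simp
    rfl

/-- Precomposition with a chain map `q : A ⟶ B`, as a chain map
`Hom(B, W) ⟶ Hom(A, W)` of hom-complexes. -/
noncomputable def homComplexPrecomp {A B : ChainComplex (ModuleCat K) ℤ} (q : A ⟶ B)
    (W : ChainComplex (ModuleCat K) ℤ) :
    homComplex K B W ⟶ homComplex K A W where
  f k := ModuleCat.ofHom <| LinearMap.pi fun i =>
    (LinearMap.lcomp K (W.X (i + k)) (q.f i).hom).comp (LinearMap.proj i)
  comm' k l hkl := by
    obtain rfl : l + 1 = k := hkl
    dsimp only [homComplex]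
    rw [dif_pos rfl, dif_pos rfl]
    apply ModuleCat.hom_ext
    apply LinearMap.ext
    intro h
    funext i
    apply LinearMap.ext
    intro x
    show W.d (i + (l + 1)) (i + l) (h i (q.f i x))
        - ((-1 : K) ^ (l + 1)) •
            (W.XIsoOfEq (show i - 1 + (l + 1) = i + l by omega)).hom
              (h (i - 1) (q.f (i - 1) (A.d i (i - 1) x)))
      = W.d (i + (l + 1)) (i + l) (h i (q.f i x))
        - ((-1 : K) ^ (l + 1)) •
            (W.XIsoOfEq (show i - 1 + (l + 1) = i + l by omega)).hom
              (h (i - 1) (B.d i (i - 1) (q.f i x)))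
    rw [hom_comm_apply q]

/-- Postcomposition with a chain map `p : A ⟶ V`, as a chain map
`Hom(X, A) ⟶ Hom(X, V)` of hom-complexes. -/
noncomputable def homComplexPostcomp (X : ChainComplex (ModuleCat K) ℤ)
    {A V : ChainComplex (ModuleCat K) ℤ} (p : A ⟶ V) :
    homComplex K X A ⟶ homComplex K X V where
  f k := ModuleCat.ofHom <| LinearMap.pi fun i =>
    (LinearMap.llcomp K (X.X i) (A.X (i + k)) (V.X (i + k)) (p.f (i + k)).hom).comp
      (LinearMap.proj i)
  comm' k l hkl := by
    obtain rfl : l + 1 = k := hkl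
    dsimp only [homComplex]
    rw [dif_pos rfl, dif_pos rfl]
    apply ModuleCat.hom_ext
    apply LinearMap.ext
    intro h
    funext i
    apply LinearMap.ext
    intro x
    show V.d (i + (l + 1)) (i + l) (p.f (i + (l + 1)) (h i x))
        - ((-1 : K) ^ (l + 1)) •
            (V.XIsoOfEq (show i - 1 + (l + 1) = i + l by omega)).hom
              (p.f (i - 1 + (l + 1)) (h (i - 1) (X.d i (i - 1) x)))
      = p.f (i + l) (A.d (i + (l + 1)) (i + l) (h i x)
          - ((-1 : K) ^ (l + 1)) •
              (A.XIsoOfEq (show i - 1 + (l + 1) = i + l by omega)).hom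
                (h (i - 1) (X.d i (i - 1) x)))
    rw [map_sub, map_smul, hom_comm_apply p, XIsoOfEq_hom_naturality p]

variable (H1 H2 H3 : ChainComplex (ModuleCat.{0} K) ℤ) (u : H1 ⟶ H2) (w : H3 ⟶ H2)

/-- The differential of the path complex `P(u, w)` of a cospan `u : H1 ⟶ H2 ⟵ H3 : w`,
sending `(g₁, h, g₃)` in degree `k` to `(d g₁, u g₁ - w g₃ - d h, d g₃)`. -/
noncomputable def pathComplexD (k l : ℤ) (hkl : l + 1 = k) :
    ModuleCat.of K ((H1.X k) × (H2.X (k + 1)) × (H3.X k)) ⟶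
    ModuleCat.of K ((H1.X l) × (H2.X (l + 1)) × (H3.X l)) :=
  ModuleCat.ofHom <| LinearMap.prod
    (((H1.d k l).hom : H1.X k →ₗ[K] H1.X l).comp
      (LinearMap.fst K (H1.X k) ((H2.X (k + 1)) × (H3.X k))))
    (LinearMap.prod
      (((H2.XIsoOfEq (show k = l + 1 by omega)).hom.hom.comp
          ((((u.f k).hom : H1.X k →ₗ[K] H2.X k).comp
              (LinearMap.fst K (H1.X k) ((H2.X (k + 1)) × (H3.X k))))
            - (((w.f k).hom : H3.X k →ₗ[K] H2.X k).comp
                ((LinearMap.snd K (H2.X (k + 1)) (H3.X k)).comp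
                  (LinearMap.snd K (H1.X k) ((H2.X (k + 1)) × (H3.X k)))))))
        - (((H2.d (k + 1) (l + 1)).hom : H2.X (k + 1) →ₗ[K] H2.X (l + 1)).comp
            ((LinearMap.fst K (H2.X (k + 1)) (H3.X k)).comp
              (LinearMap.snd K (H1.X k) ((H2.X (k + 1)) × (H3.X k))))))
      (((H3.d k l).hom : H3.X k →ₗ[K] H3.X l).comp
        ((LinearMap.snd K (H2.X (k + 1)) (H3.X k)).comp
          (LinearMap.snd K (H1.X k) ((H2.X (k + 1)) × (H3.X k))))))

lemma pathComplexD_apply (k l : ℤ) (hkl : l + 1 = k)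
    (z : (H1.X k) × (H2.X (k + 1)) × (H3.X k)) :
    pathComplexD K H1 H2 H3 u w k l hkl z
      = (H1.d k l z.1,
          (H2.XIsoOfEq (show k = l + 1 by omega)).hom (u.f k z.1 - w.f k z.2.2)
            - H2.d (k + 1) (l + 1) z.2.1,
          H3.d k l z.2.2) := rfl

/-- The path complex `P(u, w)` of a cospan `u : H1 ⟶ H2 ⟵ H3 : w`, with degree-`k`
component `H1ₖ × H2ₖ₊₁ × H3ₖ` and differential
`d (g₁, h, g₃) = (d g₁, u g₁ - w g₃ - d h, d g₃)`. -/
noncomputable def pathComplex : ChainComplex (ModuleCat K) ℤ where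
  X k := ModuleCat.of K ((H1.X k) × (H2.X (k + 1)) × (H3.X k))
  d k l := if hkl : l + 1 = k then pathComplexD K H1 H2 H3 u w k l hkl else 0
  shape k l hkl := dif_neg hkl
  d_comp_d' k l m hkl hlm := by
    obtain rfl : l + 1 = k := hkl
    obtain rfl : m + 1 = l := hlm
    rw [dif_pos rfl, dif_pos rfl]
    apply ModuleCat.hom_ext
    apply LinearMap.ext
    intro z
    have e1 : (pathComplexD K H1 H2 H3 u w (m + 1 + 1) (m + 1) rfl ≫
        pathComplexD K H1 H2 H3 u w (m + 1) m rfl) z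
        = pathComplexD K H1 H2 H3 u w (m + 1) m rfl
            (pathComplexD K H1 H2 H3 u w (m + 1 + 1) (m + 1) rfl z) := rfl
    rw [e1, pathComplexD_apply, pathComplexD_apply]
    dsimp only
    rw [d_d_apply, d_d_apply]
    refine Prod.ext rfl (Prod.ext ?_ rfl)
    dsimp only
    rw [map_sub, map_sub, map_sub]
    simp only [HomologicalComplex.XIsoOfEq_rfl, Iso.refl_hom, ModuleCat.id_apply]
    rw [d_d_apply H2, sub_zero, map_sub]
    rw [hom_comm_apply u, hom_comm_apply w]
    simp

/-- The degree-`k` component of the subcomplex `Q` of `H1 × H3`: pairs `(g₁, g₃)`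
with `u g₁ = w g₃`. -/
noncomputable def pairSub (k : ℤ) : Submodule K ((H1.X k) × (H3.X k)) :=
  LinearMap.eqLocus
    (((u.f k).hom : H1.X k →ₗ[K] H2.X k).comp (LinearMap.fst K (H1.X k) (H3.X k)))
    (((w.f k).hom : H3.X k →ₗ[K] H2.X k).comp (LinearMap.snd K (H1.X k) (H3.X k)))

lemma pairSub_stable (k l : ℤ) :
    ∀ z ∈ pairSub K H1 H2 H3 u w k,
      (((H1.d k l).hom : H1.X k →ₗ[K] H1.X l).prodMap ((H3.d k l).hom : H3.X k →ₗ[K] H3.X l)) z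
        ∈ pairSub K H1 H2 H3 u w l := by
  intro z hz
  rw [pairSub, LinearMap.mem_eqLocus] at hz ⊢
  simp only [LinearMap.comp_apply, LinearMap.fst_apply, LinearMap.snd_apply,
    LinearMap.prodMap_apply] at hz ⊢
  rw [← hom_comm_apply u, ← hom_comm_apply w, hz]

/-- The subcomplex `Q` of the product complex `H1 × H3` consisting of the pairs
`(g₁, g₃)` with `u g₁ = w g₃`, with the restricted differential. -/
noncomputable def pairComplex : ChainComplex (ModuleCat.{0} K) ℤ where
  X k := ModuleCat.of K (pairSub K H1 H2 H3 u w k)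
  d k l := ModuleCat.ofHom <| LinearMap.restrict
    (((H1.d k l).hom : H1.X k →ₗ[K] H1.X l).prodMap ((H3.d k l).hom : H3.X k →ₗ[K] H3.X l))
    (pairSub_stable K H1 H2 H3 u w k l)
  shape k l h := by
    apply ModuleCat.hom_ext
    apply LinearMap.ext
    rintro ⟨z, hz⟩
    apply Subtype.ext
    show (((H1.d k l).hom : H1.X k →ₗ[K] H1.X l).prodMap
        ((H3.d k l).hom : H3.X k →ₗ[K] H3.X l)) z = (0 : (H1.X l) × (H3.X l))
    rw [LinearMap.prodMap_apply]
    simp [H1.shape k l h, H3.shape k l h, Prod.ext_iff]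
  d_comp_d' k l m _ _ := by
    apply ModuleCat.hom_ext
    apply LinearMap.ext
    rintro ⟨z, hz⟩
    apply Subtype.ext
    show (((H1.d l m).hom : H1.X l →ₗ[K] H1.X m).prodMap ((H3.d l m).hom : H3.X l →ₗ[K] H3.X m))
        ((((H1.d k l).hom : H1.X k →ₗ[K] H1.X l).prodMap ((H3.d k l).hom : H3.X k →ₗ[K] H3.X l)) z)
      = (0 : (H1.X m) × (H3.X m))
    rw [LinearMap.prodMap_apply, LinearMap.prodMap_apply]
    simp only [Prod.ext_iff]
    exact ⟨d_d_apply H1 k l m z.1, d_d_apply H3 k l m z.2⟩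

/-- The inclusion `(g₁, g₃) ↦ (g₁, 0, g₃)` of `Q` into the path complex. -/
noncomputable def pairToPath :
    pairComplex K H1 H2 H3 u w ⟶ pathComplex K H1 H2 H3 u w where
  f k := ModuleCat.ofHom <| LinearMap.prod
      ((LinearMap.fst K (H1.X k) (H3.X k)).comp (pairSub K H1 H2 H3 u w k).subtype)
      (LinearMap.prod 0
        ((LinearMap.snd K (H1.X k) (H3.X k)).comp (pairSub K H1 H2 H3 u w k).subtype))
  comm' k l hkl := by
    obtain rfl : l + 1 = k := hkl
    dsimp only [pairComplex, pathComplex]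
    rw [dif_pos rfl]
    apply ModuleCat.hom_ext
    apply LinearMap.ext
    rintro ⟨z, hz⟩
    have hz' : u.f (l + 1) z.1 = w.f (l + 1) z.2 := hz
    refine Prod.ext rfl (Prod.ext ?_ rfl)
    show (H2.XIsoOfEq (show l + 1 = l + 1 by omega)).hom
        (u.f (l + 1) z.1 - w.f (l + 1) z.2)
        - H2.d (l + 1 + 1) (l + 1) 0 = 0
    rw [sub_eq_zero_of_eq hz', map_zero, map_zero, sub_zero]


/-! ### Auxiliary constructions for the proof -/

lemma XIsoOfEq_hom_hom_apply {R : Type} [Ring R] (Y : ChainComplex (ModuleCat R) ℤ)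
    {a b : ℤ} (e : a = b) (e' : b = a) (y : Y.X a) :
    (Y.XIsoOfEq e').hom ((Y.XIsoOfEq e).hom y) = y := by
  subst e; simp

/-- The differential of the disk complex on `H2`. -/
noncomputable def diskComplexD (k l : ℤ) (hkl : l + 1 = k) :
    ModuleCat.of K ((H2.X (k + 1)) × (H2.X k)) ⟶
    ModuleCat.of K ((H2.X (l + 1)) × (H2.X l)) :=
  ModuleCat.ofHom <| LinearMap.prod
    (((H2.XIsoOfEq (show k = l + 1 by omega)).hom.hom.comp
        (LinearMap.snd K (H2.X (k + 1)) (H2.X k)))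
      - (((H2.d (k + 1) (l + 1)).hom : H2.X (k + 1) →ₗ[K] H2.X (l + 1)).comp
          (LinearMap.fst K (H2.X (k + 1)) (H2.X k))))
    (((H2.d k l).hom : H2.X k →ₗ[K] H2.X l).comp (LinearMap.snd K (H2.X (k + 1)) (H2.X k)))

lemma diskComplexD_apply (k l : ℤ) (hkl : l + 1 = k) (z : (H2.X (k + 1)) × (H2.X k)) :
    diskComplexD K H2 k l hkl z
      = ((H2.XIsoOfEq (show k = l + 1 by omega)).hom z.2 - H2.d (k + 1) (l + 1) z.1,
          H2.d k l z.2) := rfl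

/-- The contractible "disk" complex with degree-`k` component `H2ₖ₊₁ × H2ₖ` and
differential `d (h, m) = (m - dh, dm)`. -/
noncomputable def diskComplex : ChainComplex (ModuleCat.{0} K) ℤ where
  X k := ModuleCat.of K ((H2.X (k + 1)) × (H2.X k))
  d k l := if hkl : l + 1 = k then diskComplexD K H2 k l hkl else 0
  shape k l hkl := dif_neg hkl
  d_comp_d' k l m hkl hlm := by
    obtain rfl : l + 1 = k := hkl
    obtain rfl : m + 1 = l := hlm
    rw [dif_pos rfl, dif_pos rfl]
    apply ModuleCat.hom_ext
    apply LinearMap.ext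
    intro z
    have e1 : (diskComplexD K H2 (m + 1 + 1) (m + 1) rfl ≫
        diskComplexD K H2 (m + 1) m rfl) z
        = diskComplexD K H2 (m + 1) m rfl
            (diskComplexD K H2 (m + 1 + 1) (m + 1) rfl z) := rfl
    rw [e1, diskComplexD_apply, diskComplexD_apply]
    have h3 := d_d_apply H2 (m + 1 + 1 + 1) (m + 1 + 1) (m + 1) z.1
    have h4 := d_d_apply H2 (m + 1 + 1) (m + 1) m z.2
    dsimp only
    simp [Prod.ext_iff, h3, h4]

/-- The projection `(g₁, h, g₃) ↦ (h, u g₁ - w g₃)` from the path complex to the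
disk complex. -/
noncomputable def pathToDisk : pathComplex K H1 H2 H3 u w ⟶ diskComplex K H2 where
  f k := ModuleCat.ofHom <| LinearMap.prod
    ((LinearMap.fst K (H2.X (k + 1)) (H3.X k)).comp
      (LinearMap.snd K (H1.X k) ((H2.X (k + 1)) × (H3.X k))))
    ((((u.f k).hom : H1.X k →ₗ[K] H2.X k).comp
        (LinearMap.fst K (H1.X k) ((H2.X (k + 1)) × (H3.X k))))
      - (((w.f k).hom : H3.X k →ₗ[K] H2.X k).comp
          ((LinearMap.snd K (H2.X (k + 1)) (H3.X k)).comp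
            (LinearMap.snd K (H1.X k) ((H2.X (k + 1)) × (H3.X k))))))
  comm' k l hkl := by
    obtain rfl : l + 1 = k := hkl
    dsimp only [pathComplex, diskComplex]
    rw [dif_pos rfl, dif_pos rfl]
    apply ModuleCat.hom_ext
    apply LinearMap.ext
    intro z
    refine Prod.ext rfl ?_
    show H2.d (l + 1) l (u.f (l + 1) z.1 - w.f (l + 1) z.2.2)
      = u.f l (H1.d (l + 1) l z.1) - w.f l (H3.d (l + 1) l z.2.2)
    rw [map_sub, hom_comm_apply u, hom_comm_apply w]

/-- The short complex `Q ⟶ P ⟶ D`. -/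
noncomputable def sesQPD : ShortComplex (ChainComplex (ModuleCat.{0} K) ℤ) :=
  ShortComplex.mk (pairToPath K H1 H2 H3 u w) (pathToDisk K H1 H2 H3 u w) (by
    apply HomologicalComplex.hom_ext
    intro k
    apply ModuleCat.hom_ext
    apply LinearMap.ext
    rintro ⟨z, hz⟩
    have hz' : u.f k z.1 = w.f k z.2 := hz
    refine Prod.ext rfl ?_
    show u.f k z.1 - w.f k z.2 = 0
    rw [sub_eq_zero_of_eq hz'])

lemma sesQPD_shortExact (hu : ∀ k : ℤ, Function.Surjective (u.f k)) :
    (sesQPD K H1 H2 H3 u w).ShortExact := by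
  rw [HomologicalComplex.shortExact_iff_degreewise_shortExact]
  intro k
  have hmono : Mono (((sesQPD K H1 H2 H3 u w).map
      (HomologicalComplex.eval (ModuleCat K) (ComplexShape.down ℤ) k)).f) := by
    rw [ModuleCat.mono_iff_injective]
    intro a b hab
    apply Subtype.ext
    have hab' : ((a.1.1 : H1.X k), ((0 : H2.X (k + 1)), (a.1.2 : H3.X k)))
        = ((b.1.1 : H1.X k), ((0 : H2.X (k + 1)), (b.1.2 : H3.X k))) := hab
    have h1 : a.1.1 = b.1.1 :=
      congrArg (fun q : (H1.X k) × ((H2.X (k + 1)) × (H3.X k)) => q.1) hab'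
    have h2 : a.1.2 = b.1.2 :=
      congrArg (fun q : (H1.X k) × ((H2.X (k + 1)) × (H3.X k)) => q.2.2) hab'
    exact Prod.ext h1 h2
  have hepi : Epi (((sesQPD K H1 H2 H3 u w).map
      (HomologicalComplex.eval (ModuleCat K) (ComplexShape.down ℤ) k)).g) := by
    rw [ModuleCat.epi_iff_surjective]
    rintro ⟨h, m⟩
    obtain ⟨g1, hg1⟩ := hu k m
    refine ⟨(g1, h, 0), ?_⟩
    show (h, u.f k g1 - w.f k 0) = (h, m)
    rw [map_zero, sub_zero, hg1]
  refine ⟨?_⟩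
  rw [ShortComplex.moduleCat_exact_iff]
  rintro ⟨g1, h, g3⟩ hx
  have hh : h = 0 := congrArg Prod.fst hx
  have hm : u.f k g1 - w.f k g3 = 0 := congrArg Prod.snd hx
  refine ⟨⟨(g1, g3), sub_eq_zero.mp hm⟩, ?_⟩
  show (g1, (0 : H2.X (k + 1)), g3) = (g1, h, g3)
  rw [hh]

lemma diskComplex_exact_aux (i : ℤ) (z : (H2.X (i + 1)) × (H2.X i))
    (hz : (diskComplex K H2).d i (i - 1) z = 0) :
    ∃ x₁ : (H2.X (i + 1 + 1)) × (H2.X (i + 1)),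
      (diskComplex K H2).d (i + 1) i x₁ = z := by
  have hd1 : (diskComplex K H2).d i (i - 1)
      = diskComplexD K H2 i (i - 1) (by omega) := dif_pos (by omega)
  have hd2 : (diskComplex K H2).d (i + 1) i = diskComplexD K H2 (i + 1) i rfl :=
    dif_pos rfl
  have hz' : diskComplexD K H2 i (i - 1) (by omega) z = 0 := by
    rw [hd1] at hz; exact hz
  rw [diskComplexD_apply] at hz'
  have h1 : (H2.XIsoOfEq (show i = i - 1 + 1 by omega)).hom z.2
      - H2.d (i + 1) (i - 1 + 1) z.1 = 0 := congrArg Prod.fst hz'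
  have key : diskComplexD K H2 (i + 1) i rfl ((0 : H2.X (i + 1 + 1)), z.1) = z := by
    rw [diskComplexD_apply]
    dsimp only
    simp only [HomologicalComplex.XIsoOfEq_rfl, Iso.refl_hom, ModuleCat.id_apply,
      map_zero, sub_zero]
    refine Prod.ext rfl ?_
    dsimp only
    have h2 : H2.d (i + 1) (i - 1 + 1) z.1
        = (H2.XIsoOfEq (show i = i - 1 + 1 by omega)).hom z.2 := by
      exact (sub_eq_zero.mp h1).symm
    have h3 := d_XIsoOfEq_hom_apply H2 (show i + 1 = i + 1 from rfl)
      (show i - 1 + 1 = i by omega) z.1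
    simp only [HomologicalComplex.XIsoOfEq_rfl, Iso.refl_hom, ModuleCat.id_apply] at h3
    rw [h3, h2, XIsoOfEq_hom_hom_apply]
  exact ⟨((0 : H2.X (i + 1 + 1)), z.1), by rw [hd2]; exact key⟩

lemma diskComplex_exactAt (i : ℤ) : (diskComplex K H2).ExactAt i := by
  rw [HomologicalComplex.exactAt_iff' _ (i + 1) i (i - 1)
    (ChainComplex.prev ℤ i) (ChainComplex.next ℤ i)]
  rw [ShortComplex.moduleCat_exact_iff]
  exact fun z hz => diskComplex_exact_aux K H2 i z hz

lemma quasiIso_pairToPath_of_surjective (hu : ∀ k : ℤ, Function.Surjective (u.f k)) :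
    QuasiIso (pairToPath K H1 H2 H3 u w) := by
  have hse := sesQPD_shortExact K H1 H2 H3 u w hu
  rw [quasiIso_iff]
  intro i
  rw [quasiIsoAt_iff_isIso_homologyMap]
  have hrel : (ComplexShape.down ℤ).Rel (i + 1) i := rfl
  have hz1 : IsZero ((diskComplex K H2).homology (i + 1)) := by
    rw [← HomologicalComplex.exactAt_iff_isZero_homology]
    exact diskComplex_exactAt K H2 (i + 1)
  have hz0 : IsZero ((diskComplex K H2).homology i) := by
    rw [← HomologicalComplex.exactAt_iff_isZero_homology]
    exact diskComplex_exactAt K H2 i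
  have h1 := hse.homology_exact₁ (i + 1) i hrel
  have h2 := hse.homology_exact₂ i
  have hmono : Mono (HomologicalComplex.homologyMap (pairToPath K H1 H2 H3 u w) i) :=
    h1.mono_g (hz1.eq_of_src _ _)
  have hepi : Epi (HomologicalComplex.homologyMap (pairToPath K H1 H2 H3 u w) i) :=
    h2.epi_f (hz0.eq_of_tgt _ _)
  exact isIso_of_mono_of_epi _

lemma homComplexPostcomp_surjective (X : ChainComplex (ModuleCat K) ℤ)
    {A V : ChainComplex (ModuleCat K) ℤ} (p : A ⟶ V)
    (hsurj : ∀ i : ℤ, Function.Surjective (p.f i)) (k : ℤ) :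
    Function.Surjective ((homComplexPostcomp K X p).f k) := by
  intro h
  choose s hs using fun j : ℤ => ((p.f j).hom : A.X j →ₗ[K] V.X j).exists_rightInverse_of_surjective
    (LinearMap.range_eq_top.2 (hsurj j))
  refine ⟨fun i => (s (i + k)).comp (h i), ?_⟩
  funext i
  apply LinearMap.ext
  intro x
  show p.f (i + k) (s (i + k) (h i x)) = h i x
  exact DFunLike.congr_fun (hs (i + k)) (h i x)

/-- Let `p : A ⟶ V` be a degreewise surjective quasi-isomorphism of
`ℤ`-indexed chain complexes of `K`-vector spaces and let `n : ℕ`.  Let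
`P(A, p, V)` be the path complex with degree-`k` component
`Hom(A^{⊗n}, A)ₖ ⊕ Hom(A^{⊗n}, V)_{k+1} ⊕ Hom(V^{⊗n}, V)ₖ` and differential
`d (g_A, h, g_V) = (∂g_A, p ∘ g_A - g_V ∘ p^{⊗n} - ∂h, ∂g_V)`, and let `Q` be the
subcomplex of `Hom(A^{⊗n}, A) × Hom(V^{⊗n}, V)` of pairs `(g_A, g_V)` with
`p ∘ g_A = g_V ∘ p^{⊗n}`.  Then the chain map `Q ⟶ P(A, p, V)`,
`(g_A, g_V) ↦ (g_A, 0, g_V)`, is a quasi-isomorphism. -/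
theorem quasiIso_pairToPath
    (n : ℕ) {A V : ChainComplex (ModuleCat K) ℤ} (p : A ⟶ V)
    (hsurj : ∀ i : ℤ, Function.Surjective (p.f i)) (hq : QuasiIso p) :
    QuasiIso (pairToPath K
      (homComplex K (tpow K A n) A)
      (homComplex K (tpow K A n) V)
      (homComplex K (tpow K V n) V)
      (homComplexPostcomp K (tpow K A n) p)
      (homComplexPrecomp K (tpowMap K p n) V)) :=
  quasiIso_pairToPath_of_surjective K _ _ _ _ _
    (homComplexPostcomp_surjective K (tpow K A n) p hsurj)
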